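/- Let H be an inner product space, η > 0, and x_1,…,x_n ∈ H such that ‖x_j − x_i‖ ≤ η < ‖x_j‖ for all i, j ∈ {1,…,n}. Then ∑_{i=1}^n √(‖x_i‖² − η²) ≤ ‖∑_{i=1}^n x_i‖² / ∑_{i=1}^n ‖x_i‖. -/

import Mathlib

theorem stmt_19 {𝕜 H : Type*} [RCLike 𝕜] [NormedAddCommGroup H] [InnerProductSpace 𝕜 H]
    (n : ℕ) (hn : 1 ≤ n) (η : ℝ) (hη : 0 < η) (x : ℕ → H)
    (h : ∀ i ∈ Finset.Icc 1 n, ∀ j ∈ Finset.Icc 1 n,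
      ‖x j - x i‖ ≤ η ∧ η < ‖x j‖) :
    ∑ i ∈ Finset.Icc 1 n, Real.sqrt (‖x i‖ ^ 2 - η ^ 2) ≤
      ‖∑ i ∈ Finset.Icc 1 n, x i‖ ^ 2 / ∑ i ∈ Finset.Icc 1 n, ‖x i‖ := by
  classical
  set S := Finset.Icc 1 n with hS
  set f : ℕ → ℝ := fun i => Real.sqrt (‖x i‖ ^ 2 - η ^ 2) with hf
  have hSne : S.Nonempty := ⟨1, by simp [hS, hn]⟩
  have hnorm : ∀ i ∈ S, η < ‖x i‖ := fun i hi => (h i hi i hi).2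
  have hApos : 0 < ∑ i ∈ S, ‖x i‖ :=
    Finset.sum_pos (fun i hi => hη.trans (hnorm i hi)) hSne
  rw [le_div_iff₀ hApos]
  -- expand ‖∑ x‖^2
  have hexp : ‖∑ i ∈ S, x i‖ ^ 2
      = ∑ i ∈ S, ∑ j ∈ S, RCLike.re (inner 𝕜 (x i) (x j) : 𝕜) := by
    rw [← inner_self_eq_norm_sq (𝕜 := 𝕜), sum_inner]
    rw [map_sum]
    refine Finset.sum_congr rfl fun i _ => ?_
    rw [inner_sum, map_sum]
  have key : ∀ i ∈ S, ∀ j ∈ S,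
      f i * ‖x j‖ + f j * ‖x i‖ ≤ 2 * RCLike.re (inner 𝕜 (x i) (x j) : 𝕜) := by
    intro i hi j hj
    have hij := (h i hi j hj).1
    have hsq : ‖x j - x i‖ ^ 2 ≤ η ^ 2 :=
      pow_le_pow_left₀ (norm_nonneg _) hij 2
    have hexp2 : ‖x j - x i‖ ^ 2
        = ‖x j‖ ^ 2 - 2 * RCLike.re (inner 𝕜 (x j) (x i) : 𝕜) + ‖x i‖ ^ 2 :=
      @norm_sub_sq 𝕜 _ _ _ _ (x j) (x i)
    have hre : RCLike.re (inner 𝕜 (x j) (x i) : 𝕜)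
        = RCLike.re (inner 𝕜 (x i) (x j) : 𝕜) := by
      rw [← inner_conj_symm (x i) (x j), RCLike.conj_re]
    have hfi : f i ^ 2 = ‖x i‖ ^ 2 - η ^ 2 :=
      Real.sq_sqrt (by nlinarith [hnorm i hi])
    have hfj : f j ^ 2 = ‖x j‖ ^ 2 - η ^ 2 :=
      Real.sq_sqrt (by nlinarith [hnorm j hj])
    have hfi0 : 0 ≤ f i := Real.sqrt_nonneg _
    have hfj0 : 0 ≤ f j := Real.sqrt_nonneg _
    nlinarith [sq_nonneg (f i - ‖x j‖), sq_nonneg (f j - ‖x i‖)]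
  have hsum : ∑ i ∈ S, ∑ j ∈ S, (f i * ‖x j‖ + f j * ‖x i‖)
      ≤ ∑ i ∈ S, ∑ j ∈ S, 2 * RCLike.re (inner 𝕜 (x i) (x j) : 𝕜) := by
    refine Finset.sum_le_sum fun i hi => Finset.sum_le_sum fun j hj => key i hi j hj
  have hlhs : ∑ i ∈ S, ∑ j ∈ S, (f i * ‖x j‖ + f j * ‖x i‖)
      = 2 * ((∑ i ∈ S, f i) * ∑ i ∈ S, ‖x i‖) := by
    simp only [Finset.sum_add_distrib]
    rw [Finset.sum_comm (f := fun i j => f j * ‖x i‖)]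
    simp only [← Finset.sum_mul_sum]
    ring
  have hrhs : ∑ i ∈ S, ∑ j ∈ S, 2 * RCLike.re (inner 𝕜 (x i) (x j) : 𝕜)
      = 2 * ‖∑ i ∈ S, x i‖ ^ 2 := by
    rw [hexp]
    simp [Finset.mul_sum]
  rw [hlhs, hrhs] at hsum
  linarith
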